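/- Let S be a commutative ring, R an S-algebra, E an injective cogenerator of the category of S-modules, and write (-)^d = Hom_S(-,E) for the induced contravariant functors between left R-modules and right R-modules. Let P₂ → P₁ →ζ→ P₀ → M → 0 be an exact sequence of left R-modules with P₀, P₁, P₂ finitely presented projective. Then M is partial silting with respect to ζ (i.e. M ∈ 𝒟_ζ and 𝒟_ζ is closed under direct sums) if and only if the right R-module M^d is partial cosilting with respect to ζ^d : P₀^d → P₁^d (i.e. M^d ∈ 𝓑_{ζ^d} and 𝓑_{ζ^d} is closed under arbitrary direct products, where 0 → M^d → P₀^d →ζ^d→ P₁^d is an injective copresentation of M^d). -/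

import Mathlib

universe u u' v

open Function

section Classes

variable (A : Type u') [Ring A]

/-- `X ∈ 𝓑_ζ`: every map `X → Q₁` factors through `ζ`. -/
def MemB {Q₀ Q₁ : Type v} [AddCommGroup Q₀] [Module A Q₀] [AddCommGroup Q₁] [Module A Q₁]
    (ζ : Q₀ →ₗ[A] Q₁) (X : Type v) [AddCommGroup X] [Module A X] : Prop :=
  Surjective fun g : X →ₗ[A] Q₀ => ζ ∘ₗ g

/-- `Y ∈ 𝒟_ζ`: every map `P₁ → Y` factors through `ζ`. -/
def MemD {P₁ P₀ : Type v} [AddCommGroup P₁] [Module A P₁] [AddCommGroup P₀] [Module A P₀]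
    (ζ : P₁ →ₗ[A] P₀) (Y : Type v) [AddCommGroup Y] [Module A Y] : Prop :=
  Surjective fun g : P₀ →ₗ[A] Y => g ∘ₗ ζ

/-- `X ∈ Cogen T`: `X` embeds into a direct product of copies of `T`. -/
def MemCogen (T : Type v) [AddCommGroup T] [Module A T]
    (X : Type v) [AddCommGroup X] [Module A X] : Prop :=
  ∃ (ι : Type v) (f : X →ₗ[A] (ι → T)), Injective f

/-- `Y ∈ Gen M`: `Y` is an epimorphic image of a direct sum of copies of `M`. -/
def MemGen (M : Type v) [AddCommGroup M] [Module A M]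
    (Y : Type v) [AddCommGroup Y] [Module A Y] : Prop :=
  ∃ (ι : Type v) (p : (ι →₀ M) →ₗ[A] Y), Surjective p

end Classes

section Duality

variable (S : Type u) [CommRing S] (R : Type u') [Ring R] [Algebra S R]
variable (E : Type v) [AddCommGroup E] [Module S E]

/-- The right `R`-module (i.e. `Rᵐᵒᵖ`-module) structure on the dual `Hom_S(M, E)` of a
left `R`-module `M`, given by `(f • r) m = f (r • m)`. -/
instance leftDualModule (M : Type v) [AddCommGroup M] [Module S M] [Module R M]
    [IsScalarTower S R M] : Module Rᵐᵒᵖ (M →ₗ[S] E) where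
  smul r f := f ∘ₗ DistribMulAction.toLinearMap S M r.unop
  one_smul f := by ext m; exact congrArg f (one_smul R m)
  mul_smul r r' f := by ext m; exact congrArg f (mul_smul r'.unop r.unop m)
  smul_zero r := rfl
  smul_add r f g := rfl
  add_smul r r' f := by ext m; exact congrArg f (add_smul r.unop r'.unop m) ▸ map_add f _ _
  zero_smul f := by ext m; exact (congrArg f (zero_smul R m)).trans (map_zero f)

/-- The left `R`-module structure on the dual `Hom_S(X, E)` of a right `R`-module
(i.e. `Rᵐᵒᵖ`-module) `X`, given by `(r • f) x = f (x • r)`. -/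
instance rightDualModule (X : Type v) [AddCommGroup X] [Module S X] [Module Rᵐᵒᵖ X]
    [IsScalarTower S Rᵐᵒᵖ X] : Module R (X →ₗ[S] E) where
  smul r f := f ∘ₗ DistribMulAction.toLinearMap S X (MulOpposite.op r)
  one_smul f := by ext x; exact congrArg f (one_smul Rᵐᵒᵖ x)
  mul_smul r r' f := by
    ext x
    exact congrArg f (mul_smul (MulOpposite.op r') (MulOpposite.op r) x)
  smul_zero r := rfl
  smul_add r f g := rfl
  add_smul r r' f := by
    ext x
    exact congrArg f (add_smul (MulOpposite.op r) (MulOpposite.op r') x) ▸ map_add f _ _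
  zero_smul f := by ext x; exact (congrArg f (zero_smul Rᵐᵒᵖ x)).trans (map_zero f)

/-- The dual `ζ^d : Hom_S(P₀, E) → Hom_S(P₁, E)` of a homomorphism `ζ : P₁ → P₀` of left
`R`-modules, as a homomorphism of right `R`-modules (i.e. of `Rᵐᵒᵖ`-modules). -/
def dualMap {P₁ P₀ : Type v} [AddCommGroup P₁] [Module S P₁] [Module R P₁] [IsScalarTower S R P₁]
    [AddCommGroup P₀] [Module S P₀] [Module R P₀] [IsScalarTower S R P₀]
    (ζ : P₁ →ₗ[R] P₀) : (P₀ →ₗ[S] E) →ₗ[Rᵐᵒᵖ] (P₁ →ₗ[S] E) where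
  toFun f := f ∘ₗ (ζ.restrictScalars S)
  map_add' f g := rfl
  map_smul' r f := by ext x; exact congrArg f (map_smul ζ r.unop x).symm

end Duality

section AuxBase

variable {S : Type u} [CommRing S]
variable {E : Type v} [AddCommGroup E] [Module S E]

theorem aux_sep
    (hcog : ∀ (N : Type v) [AddCommGroup N] [Module S N],
      ∃ (ι : Type v) (f : N →ₗ[S] (ι → E)), Injective f)
    {A : Type v} [AddCommGroup A] [Module S A] {a : A} (ha : a ≠ 0) :
    ∃ l : A →ₗ[S] E, l a ≠ 0 := by
  obtain ⟨ι, f, hf⟩ := hcog A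
  have hfa : f a ≠ 0 := fun h => ha (hf (by rw [h, map_zero]))
  obtain ⟨i, hi⟩ := Function.ne_iff.mp hfa
  exact ⟨LinearMap.proj i ∘ₗ f, by simpa using hi⟩

theorem surj_iff_dual_inj
    (hcog : ∀ (N : Type v) [AddCommGroup N] [Module S N],
      ∃ (ι : Type v) (f : N →ₗ[S] (ι → E)), Injective f)
    {A B : Type v} [AddCommGroup A] [Module S A] [AddCommGroup B] [Module S B]
    (φ : A →ₗ[S] B) :
    Surjective φ ↔ Injective (fun l : B →ₗ[S] E => l ∘ₗ φ) := by
  constructor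
  · intro hs l l' h
    ext b
    obtain ⟨a, rfl⟩ := hs b
    exact LinearMap.congr_fun h a
  · intro hinj
    by_contra hns
    rw [← LinearMap.range_eq_top] at hns
    obtain ⟨b, hb⟩ : ∃ b, b ∉ LinearMap.range φ := by
      by_contra h
      push_neg at h
      exact hns (Submodule.eq_top_iff'.mpr h)
    have hqb : (LinearMap.range φ).mkQ b ≠ 0 := by
      simpa [Submodule.Quotient.mk_eq_zero] using hb
    obtain ⟨l, hl⟩ := aux_sep hcog hqb
    have h0 : (l ∘ₗ (LinearMap.range φ).mkQ) ∘ₗ φ = (0 : B →ₗ[S] E) ∘ₗ φ := by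
      ext a
      have : (LinearMap.range φ).mkQ (φ a) = 0 :=
        (Submodule.Quotient.mk_eq_zero _).mpr ⟨a, rfl⟩
      simp [this]
    have := hinj h0
    exact hl (by simpa using LinearMap.congr_fun this b)

theorem inj_iff_dual_surj
    (hcog : ∀ (N : Type v) [AddCommGroup N] [Module S N],
      ∃ (ι : Type v) (f : N →ₗ[S] (ι → E)), Injective f)
    [Module.Injective S E]
    {A B : Type v} [AddCommGroup A] [Module S A] [AddCommGroup B] [Module S B]
    (φ : A →ₗ[S] B) :
    Injective φ ↔ Surjective (fun l : B →ₗ[S] E => l ∘ₗ φ) := by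
  constructor
  · intro hi l
    obtain ⟨h, hh⟩ := Module.Injective.out φ hi l
    exact ⟨h, by ext a; exact hh a⟩
  · intro hs a a' haa
    by_contra hne
    have h0 : a - a' ≠ 0 := sub_ne_zero.mpr hne
    obtain ⟨l, hl⟩ := aux_sep hcog h0
    obtain ⟨g, hg⟩ := hs l
    apply hl
    have : l (a - a') = g (φ (a - a')) := (LinearMap.congr_fun hg (a - a')).symm
    rw [this, map_sub, haa, sub_self, map_zero]

end AuxBase

section AuxProj

variable {R : Type u'} [Ring R]

theorem exists_dual_basis (P : Type v) [AddCommGroup P] [Module R P]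
    [Module.Projective R P] [Module.Finite R P] :
    ∃ (n : ℕ) (p : Fin n → P) (c : Fin n → (P →ₗ[R] R)),
      ∀ x, ∑ k, c k x • p k = x := by
  obtain ⟨n, b, hb⟩ := Module.Finite.exists_fin (R := R) (M := P)
  have hsurj : Surjective (Fintype.linearCombination R b) := by
    rw [← LinearMap.range_eq_top, Fintype.range_linearCombination, hb]
  obtain ⟨s, hs⟩ := Module.projective_lifting_property
    (Fintype.linearCombination R b) LinearMap.id hsurj
  refine ⟨n, b, fun k => LinearMap.proj k ∘ₗ s, fun x => ?_⟩
  have := LinearMap.congr_fun hs x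
  simpa [Fintype.linearCombination_apply] using this

/-- The transpose of `ζ : P₁ → P₀`, as a map of right `R`-modules `P₀^* → P₁^*`. -/
def starMap {P₁ P₀ : Type v} [AddCommGroup P₁] [Module R P₁] [AddCommGroup P₀] [Module R P₀]
    (ζ : P₁ →ₗ[R] P₀) : (P₀ →ₗ[R] R) →ₗ[Rᵐᵒᵖ] (P₁ →ₗ[R] R) where
  toFun ψ := ψ ∘ₗ ζ
  map_add' _ _ := rfl
  map_smul' _ _ := rfl

theorem coExpand {P : Type v} [AddCommGroup P] [Module R P] {n : ℕ}
    (p : Fin n → P) (c : Fin n → (P →ₗ[R] R)) (hdb : ∀ x, ∑ k, c k x • p k = x)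
    (ψ : P →ₗ[R] R) : ∑ k, MulOpposite.op (ψ (p k)) • c k = ψ := by
  ext x
  have h1 : ψ x = ψ (∑ k, c k x • p k) := by rw [hdb]
  rw [LinearMap.sum_apply, h1, map_sum]
  refine Finset.sum_congr rfl fun k _ => ?_
  rw [map_smul]
  rfl

end AuxProj

section Trace

variable {S : Type u} [CommRing S] {R : Type u'} [Ring R] [Algebra S R]
variable {E : Type v} [AddCommGroup E] [Module S E]

/-- The dual of a module with a compatible `S`-action is a scalar tower. -/
instance dualIsScalarTower {M : Type v} [AddCommGroup M] [Module S M] [Module R M]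
    [IsScalarTower S R M] : IsScalarTower S Rᵐᵒᵖ (M →ₗ[S] E) :=
  ⟨fun s r f => by
    ext m
    show f ((s • r).unop • m) = s • f (r.unop • m)
    rw [MulOpposite.unop_smul, smul_assoc, map_smul]⟩

variable {P : Type v} [AddCommGroup P] [Module R P]
variable {Y : Type v} [AddCommGroup Y] [Module S Y] [Module R Y] [IsScalarTower S R Y]

/-- The rank one map `x ↦ ψ(x) • y`. -/
def gmap (ψ : P →ₗ[R] R) (y : Y) : P →ₗ[R] Y where
  toFun x := ψ x • y
  map_add' x x' := by simp [add_smul]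
  map_smul' r x := by simp [map_smul, smul_eq_mul, mul_smul]

@[simp] theorem gmap_apply (ψ : P →ₗ[R] R) (y : Y) (x : P) : gmap ψ y x = ψ x • y := rfl

/-- `y ↦ Λ(gmap ψ y)`, as a linear functional. -/
def gammaBetaInner (Λ : (P →ₗ[R] Y) →ₗ[S] E) (ψ : P →ₗ[R] R) : Y →ₗ[S] E where
  toFun y := Λ (gmap ψ y)
  map_add' y y' := by
    have : gmap ψ (y + y') = gmap ψ y + gmap ψ y' := by ext x; exact smul_add _ _ _
    show Λ (gmap ψ (y + y')) = Λ (gmap ψ y) + Λ (gmap ψ y')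
    rw [this, map_add]
  map_smul' s y := by
    simp only [RingHom.id_apply]
    have : gmap ψ (s • y) = s • gmap ψ y := by ext x; exact smul_comm _ _ _
    show Λ (gmap ψ (s • y)) = s • Λ (gmap ψ y)
    rw [this, map_smul]

@[simp] theorem gammaBetaInner_apply (Λ : (P →ₗ[R] Y) →ₗ[S] E) (ψ : P →ₗ[R] R) (y : Y) :
    gammaBetaInner Λ ψ y = Λ (gmap ψ y) := rfl

end Trace

section Tuple

variable {R : Type u'} [Ring R]
variable {P : Type v} [AddCommGroup P] [Module R P]

theorem opSmulOpSmul {X : Type v} [AddCommGroup X] [Module Rᵐᵒᵖ X] (a b : R) (x : X) :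
    MulOpposite.op a • MulOpposite.op b • x = MulOpposite.op (b * a) • x := by
  rw [← mul_smul, ← MulOpposite.op_mul]

theorem sum_mul_eq {n : ℕ} (p : Fin n → P) (c : Fin n → (P →ₗ[R] R))
    (hdb : ∀ x, ∑ k, c k x • p k = x) (ψ : P →ₗ[R] R) (w : P) :
    ∑ k, c k w * ψ (p k) = ψ w := by
  conv_rhs => rw [← hdb w, map_sum]
  refine Finset.sum_congr rfl fun k _ => ?_
  rw [map_smul, smul_eq_mul]

theorem sum_op_smul_eq {X : Type v} [AddCommGroup X] [Module Rᵐᵒᵖ X]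
    {n : ℕ} (p : Fin n → P) (c : Fin n → (P →ₗ[R] R))
    (hdb : ∀ x, ∑ k, c k x • p k = x) (ψ : P →ₗ[R] R) (w : P) (x : X) :
    ∑ k, MulOpposite.op (c k w * ψ (p k)) • x = MulOpposite.op (ψ w) • x := by
  calc ∑ k, MulOpposite.op (c k w * ψ (p k)) • x
      = (∑ k, MulOpposite.op (c k w * ψ (p k))) • x := (Finset.sum_smul).symm
    _ = (MulOpposite.op (∑ k, c k w * ψ (p k))) • x := by rw [Finset.op_sum]
    _ = MulOpposite.op (ψ w) • x := by rw [sum_mul_eq p c hdb ψ w]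

variable {n : ℕ} (p : Fin n → P) (c : Fin n → (P →ₗ[R] R))

/-- A tuple is "fixed" if it is invariant under the dual-basis idempotent; such
tuples correspond to elements of `X ⊗_R P`. -/
def Efix {X : Type v} [AddCommGroup X] [Module Rᵐᵒᵖ X] (t : Fin n → X) : Prop :=
  ∀ l, ∑ j, MulOpposite.op (c l (p j)) • t j = t l

end Tuple

section TupleSub

variable (S : Type u) [CommRing S] {R : Type u'} [Ring R] [Algebra S R]
variable {P : Type v} [AddCommGroup P] [Module R P]
variable {n : ℕ} (p : Fin n → P) (c : Fin n → (P →ₗ[R] R))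
variable (X : Type v) [AddCommGroup X] [Module S X] [Module Rᵐᵒᵖ X] [IsScalarTower S Rᵐᵒᵖ X]

/-- The submodule of fixed tuples, an avatar of `X ⊗_R P` for `P` f.g. projective. -/
def fixSub : Submodule S (Fin n → X) where
  carrier := {t | Efix p c t}
  add_mem' := by
    intro a b ha hb l
    calc ∑ j, MulOpposite.op (c l (p j)) • (a + b) j
        = (∑ j, MulOpposite.op (c l (p j)) • a j) + ∑ j, MulOpposite.op (c l (p j)) • b j := by
          rw [← Finset.sum_add_distrib]
          exact Finset.sum_congr rfl fun j _ => smul_add _ _ _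
      _ = (a + b) l := by rw [ha l, hb l]; rfl
  zero_mem' := by
    intro l
    simp
  smul_mem' := by
    intro s t ht l
    calc ∑ j, MulOpposite.op (c l (p j)) • (s • t) j
        = s • ∑ j, MulOpposite.op (c l (p j)) • t j := by
          rw [Finset.smul_sum]
          exact Finset.sum_congr rfl fun j _ => smul_comm _ _ _
      _ = (s • t) l := by rw [ht l]; rfl

theorem mem_fixSub {t : Fin n → X} : t ∈ fixSub S p c X ↔ Efix p c t := Iff.rfl

end TupleSub

section Cmat

variable {R : Type u'} [Ring R]
variable {P₁ P₀ : Type v} [AddCommGroup P₁] [Module R P₁] [AddCommGroup P₀] [Module R P₀]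
variable (ζ : P₁ →ₗ[R] P₀)
variable {n₁ : ℕ} (p₁ : Fin n₁ → P₁) (c₁ : Fin n₁ → (P₁ →ₗ[R] R))
variable {n₀ : ℕ} (p₀ : Fin n₀ → P₀) (c₀ : Fin n₀ → (P₀ →ₗ[R] R))

/-- The matrix of `ζ` acting on tuples, an avatar of `X ⊗ ζ`. -/
def cmat {X : Type v} [AddCommGroup X] [Module Rᵐᵒᵖ X] (t : Fin n₁ → X) (k : Fin n₀) : X :=
  ∑ j, MulOpposite.op (c₀ k (ζ (p₁ j))) • t j

theorem cmat_fix {X : Type v} [AddCommGroup X] [Module Rᵐᵒᵖ X]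
    (hdb₀ : ∀ x, ∑ k, c₀ k x • p₀ k = x) (t : Fin n₁ → X) :
    Efix p₀ c₀ (cmat ζ p₁ c₀ t) := by
  intro l
  calc ∑ k, MulOpposite.op (c₀ l (p₀ k)) • cmat ζ p₁ c₀ t k
      = ∑ k, ∑ j, MulOpposite.op (c₀ k (ζ (p₁ j)) * c₀ l (p₀ k)) • t j := by
        refine Finset.sum_congr rfl fun k _ => ?_
        rw [cmat, Finset.smul_sum]
        exact Finset.sum_congr rfl fun j _ => opSmulOpSmul _ _ _
    _ = ∑ j, ∑ k, MulOpposite.op (c₀ k (ζ (p₁ j)) * c₀ l (p₀ k)) • t j := Finset.sum_comm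
    _ = cmat ζ p₁ c₀ t l := by
        refine Finset.sum_congr rfl fun j _ => ?_
        exact sum_op_smul_eq p₀ c₀ hdb₀ (c₀ l) (ζ (p₁ j)) (t j)

/-- The elementwise injectivity condition: `X ⊗ ζ` is injective. -/
def tInj (X : Type v) [AddCommGroup X] [Module Rᵐᵒᵖ X] : Prop :=
  ∀ t : Fin n₁ → X, Efix p₁ c₁ t → (∀ k, cmat ζ p₁ c₀ t k = 0) → ∀ j, t j = 0

theorem tInj_pi {ι : Type v} (X : ι → Type v) [∀ i, AddCommGroup (X i)]
    [∀ i, Module Rᵐᵒᵖ (X i)] (hX : ∀ i, tInj ζ p₁ c₁ c₀ (X i)) :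
    tInj ζ p₁ c₁ c₀ (∀ i, X i) := by
  intro t hfix hker j
  funext i
  refine hX i (fun k => t k i) (fun l => ?_) (fun k => ?_) j
  · have := congrFun (hfix l) i
    simpa [Finset.sum_apply] using this
  · have := congrFun (hker k) i
    simpa [cmat, Finset.sum_apply] using this

end Cmat

section TMap

variable (S : Type u) [CommRing S] {R : Type u'} [Ring R] [Algebra S R]
variable {E : Type v} [AddCommGroup E] [Module S E]
variable {P₁ P₀ : Type v}
  [AddCommGroup P₁] [Module S P₁] [Module R P₁] [IsScalarTower S R P₁]
  [AddCommGroup P₀] [Module S P₀] [Module R P₀] [IsScalarTower S R P₀]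
variable (ζ : P₁ →ₗ[R] P₀)
variable {n₁ : ℕ} (p₁ : Fin n₁ → P₁) (c₁ : Fin n₁ → (P₁ →ₗ[R] R))
variable {n₀ : ℕ} (p₀ : Fin n₀ → P₀) (c₀ : Fin n₀ → (P₀ →ₗ[R] R))
variable (X : Type v) [AddCommGroup X] [Module S X] [Module Rᵐᵒᵖ X] [IsScalarTower S Rᵐᵒᵖ X]

/-- `X ⊗ ζ` as a linear map on fixed tuples. -/
def tMap (hdb₀ : ∀ x, ∑ k, c₀ k x • p₀ k = x) :
    fixSub S p₁ c₁ X →ₗ[S] fixSub S p₀ c₀ X where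
  toFun t := ⟨cmat ζ p₁ c₀ t.1, cmat_fix ζ p₁ p₀ c₀ hdb₀ t.1⟩
  map_add' t t' := by
    apply Subtype.ext
    funext k
    show cmat ζ p₁ c₀ (t.1 + t'.1) k = cmat ζ p₁ c₀ t.1 k + cmat ζ p₁ c₀ t'.1 k
    rw [cmat, cmat, cmat, ← Finset.sum_add_distrib]
    exact Finset.sum_congr rfl fun j _ => smul_add _ _ _
  map_smul' s t := by
    apply Subtype.ext
    funext k
    show cmat ζ p₁ c₀ (s • t.1) k = s • cmat ζ p₁ c₀ t.1 k
    rw [cmat, cmat, Finset.smul_sum]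
    exact Finset.sum_congr rfl fun j _ => smul_comm _ _ _

theorem tMap_inj_iff (hdb₀ : ∀ x, ∑ k, c₀ k x • p₀ k = x) :
    Injective (tMap S ζ p₁ c₁ p₀ c₀ X hdb₀) ↔ tInj ζ p₁ c₁ c₀ X := by
  constructor
  · intro hI t hfix hker j
    have h0 : tMap S ζ p₁ c₁ p₀ c₀ X hdb₀ ⟨t, hfix⟩ = 0 := by
      apply Subtype.ext
      funext k
      exact hker k
    have := hI (h0.trans (map_zero _).symm)
    exact congrFun (congrArg Subtype.val this) j
  · intro hT a b hab
    have hsub : a - b = 0 := by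
      have h1 : tMap S ζ p₁ c₁ p₀ c₀ X hdb₀ (a - b) = 0 := by rw [map_sub, hab, sub_self]
      apply Subtype.ext
      funext j
      have h2 : ∀ k, cmat ζ p₁ c₀ (a - b).1 k = 0 :=
        fun k => congrFun (congrArg Subtype.val h1) k
      exact hT (a - b).1 (a - b).2 h2 j
    rw [← sub_eq_zero]
    exact hsub

end TMap

section DeltaPrime

variable (S : Type u) [CommRing S] {R : Type u'} [Ring R] [Algebra S R]
variable {E : Type v} [AddCommGroup E] [Module S E]
variable {P : Type v} [AddCommGroup P] [Module S P] [Module R P] [IsScalarTower S R P]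
variable {n : ℕ} (p : Fin n → P) (c : Fin n → (P →ₗ[R] R))
variable {X : Type v} [AddCommGroup X] [Module S X] [Module Rᵐᵒᵖ X] [IsScalarTower S Rᵐᵒᵖ X]

/-- Trace pairing `Hom_{Rᵒᵖ}(X, P^d) → T_P(X)^d`. -/
def deltaFun' (h : X →ₗ[Rᵐᵒᵖ] (P →ₗ[S] E)) : (fixSub S p c X) →ₗ[S] E where
  toFun t := ∑ k, h (t.1 k) (p k)
  map_add' t t' := by
    show ∑ k, h ((t.1 + t'.1) k) (p k) = _
    simp [Finset.sum_add_distrib]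
  map_smul' s t := by
    show ∑ k, h ((s • t.1) k) (p k) = s • ∑ k, h (t.1 k) (p k)
    rw [Finset.smul_sum]
    refine Finset.sum_congr rfl fun k _ => ?_
    show h (s • t.1 k) (p k) = s • h (t.1 k) (p k)
    rw [← algebraMap_smul Rᵐᵒᵖ s (t.1 k), map_smul]
    show h (t.1 k) ((MulOpposite.unop (algebraMap S Rᵐᵒᵖ s)) • p k) = _
    rw [show (MulOpposite.unop (algebraMap S Rᵐᵒᵖ s)) = algebraMap S R s from rfl,
      algebraMap_smul, map_smul]

/-- The fixed tuple `k ↦ op (c k q) • ξ`. -/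
def tvec (hdb : ∀ x, ∑ k, c k x • p k = x) (ξ : X) (q : P) : fixSub S p c X :=
  ⟨fun k => MulOpposite.op (c k q) • ξ, by
    intro l
    calc ∑ j, MulOpposite.op (c l (p j)) • MulOpposite.op (c j q) • ξ
        = ∑ j, MulOpposite.op (c j q * c l (p j)) • ξ :=
          Finset.sum_congr rfl fun j _ => opSmulOpSmul _ _ _
      _ = MulOpposite.op (c l q) • ξ := sum_op_smul_eq p c hdb (c l) q ξ⟩

@[simp] theorem tvec_coe (hdb : ∀ x, ∑ k, c k x • p k = x) (ξ : X) (q : P) (k : Fin n) :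
    (tvec S p c hdb ξ q).1 k = MulOpposite.op (c k q) • ξ := rfl

variable (hdb : ∀ x, ∑ k, c k x • p k = x)

/-- Inverse trace pairing, inner component. -/
def gammaDeltaInner' (Λ : (fixSub S p c X) →ₗ[S] E) (ξ : X) : P →ₗ[S] E where
  toFun q := Λ (tvec S p c hdb ξ q)
  map_add' q q' := by
    have : tvec S p c hdb ξ (q + q') = tvec S p c hdb ξ q + tvec S p c hdb ξ q' := by
      apply Subtype.ext
      funext k
      show MulOpposite.op (c k (q + q')) • ξ = MulOpposite.op (c k q) • ξ + MulOpposite.op (c k q') • ξ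
      rw [map_add, MulOpposite.op_add, add_smul]
    show Λ (tvec S p c hdb ξ (q + q')) = Λ (tvec S p c hdb ξ q) + Λ (tvec S p c hdb ξ q')
    rw [this, map_add]
  map_smul' s q := by
    simp only [RingHom.id_apply]
    have : tvec S p c hdb ξ (s • q) = s • tvec S p c hdb ξ q := by
      apply Subtype.ext
      funext k
      show MulOpposite.op (c k (s • q)) • ξ = s • (MulOpposite.op (c k q) • ξ)
      rw [← algebraMap_smul R s q, map_smul, smul_eq_mul, MulOpposite.op_mul, mul_smul,
        show MulOpposite.op (algebraMap S R s) = algebraMap S Rᵐᵒᵖ s from rfl,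
        algebraMap_smul, smul_comm]
    show Λ (tvec S p c hdb ξ (s • q)) = s • Λ (tvec S p c hdb ξ q)
    rw [this, map_smul]

/-- Inverse trace pairing. -/
def gammaDelta' (Λ : (fixSub S p c X) →ₗ[S] E) : X →ₗ[Rᵐᵒᵖ] (P →ₗ[S] E) where
  toFun ξ := gammaDeltaInner' S p c hdb Λ ξ
  map_add' ξ ξ' := by
    ext q
    show Λ (tvec S p c hdb (ξ + ξ') q) = Λ (tvec S p c hdb ξ q) + Λ (tvec S p c hdb ξ' q)
    have : tvec S p c hdb (ξ + ξ') q = tvec S p c hdb ξ q + tvec S p c hdb ξ' q := by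
      apply Subtype.ext
      funext k
      exact smul_add _ _ _
    rw [this, map_add]
  map_smul' r ξ := by
    ext q
    show Λ (tvec S p c hdb (r • ξ) q) = Λ (tvec S p c hdb ξ (r.unop • q))
    have : tvec S p c hdb (r • ξ) q = tvec S p c hdb ξ (r.unop • q) := by
      apply Subtype.ext
      funext k
      show MulOpposite.op (c k q) • (r • ξ) = MulOpposite.op (c k (r.unop • q)) • ξ
      rw [map_smul, smul_eq_mul, MulOpposite.op_mul, MulOpposite.op_unop, ← mul_smul]
    rw [this]

theorem gammaDelta'_deltaFun' (h : X →ₗ[Rᵐᵒᵖ] (P →ₗ[S] E)) :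
    gammaDelta' S p c hdb (deltaFun' S p c h) = h := by
  ext ξ q
  show ∑ k, h ((tvec S p c hdb ξ q).1 k) (p k) = h ξ q
  calc ∑ k, h ((tvec S p c hdb ξ q).1 k) (p k)
      = ∑ k, h ξ (c k q • p k) := by
        refine Finset.sum_congr rfl fun k _ => ?_
        rw [tvec_coe, map_smul h]
        rfl
    _ = h ξ q := by rw [← map_sum, hdb]

theorem deltaFun'_gammaDelta' (Λ : (fixSub S p c X) →ₗ[S] E) :
    deltaFun' S p c (gammaDelta' S p c hdb Λ) = Λ := by
  ext t
  show ∑ k, Λ (tvec S p c hdb (t.1 k) (p k)) = Λ t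
  rw [← map_sum]
  congr 1
  apply Subtype.ext
  funext l
  calc (↑(∑ k, tvec S p c hdb (t.1 k) (p k)) : Fin n → X) l
      = ∑ k, MulOpposite.op (c l (p k)) • t.1 k := by
        rw [Submodule.coe_sum, Finset.sum_apply]
        exact Finset.sum_congr rfl fun k _ => rfl
    _ = t.1 l := t.2 l

end DeltaPrime

section CharKey

variable {S : Type u} [CommRing S] {R : Type u'} [Ring R] [Algebra S R]
variable {E : Type v} [AddCommGroup E] [Module S E]
variable {P₁ P₀ : Type v}
  [AddCommGroup P₁] [Module S P₁] [Module R P₁] [IsScalarTower S R P₁]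
  [AddCommGroup P₀] [Module S P₀] [Module R P₀] [IsScalarTower S R P₀]
variable (ζ : P₁ →ₗ[R] P₀)
variable {n₁ : ℕ} (p₁ : Fin n₁ → P₁) (c₁ : Fin n₁ → (P₁ →ₗ[R] R))
variable {n₀ : ℕ} (p₀ : Fin n₀ → P₀) (c₀ : Fin n₀ → (P₀ →ₗ[R] R))

theorem delta_square
    (hdb₀ : ∀ x, ∑ k, c₀ k x • p₀ k = x)
    {X : Type v} [AddCommGroup X] [Module S X] [Module Rᵐᵒᵖ X] [IsScalarTower S Rᵐᵒᵖ X]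
    (h : X →ₗ[Rᵐᵒᵖ] (P₀ →ₗ[S] E)) (t : fixSub S p₁ c₁ X) :
    deltaFun' S p₁ c₁ (dualMap S R E ζ ∘ₗ h) t
      = deltaFun' S p₀ c₀ h (tMap S ζ p₁ c₁ p₀ c₀ X hdb₀ t) := by
  show ∑ j, (dualMap S R E ζ) (h (t.1 j)) (p₁ j) = ∑ k, h (cmat ζ p₁ c₀ t.1 k) (p₀ k)
  calc ∑ j, (dualMap S R E ζ) (h (t.1 j)) (p₁ j)
      = ∑ j, h (t.1 j) (ζ (p₁ j)) := rfl
    _ = ∑ j, ∑ k, h (t.1 j) (c₀ k (ζ (p₁ j)) • p₀ k) := by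
        refine Finset.sum_congr rfl fun j _ => ?_
        rw [← map_sum, hdb₀]
    _ = ∑ k, ∑ j, h (MulOpposite.op (c₀ k (ζ (p₁ j))) • t.1 j) (p₀ k) := by
        rw [Finset.sum_comm]
        refine Finset.sum_congr rfl fun k _ => Finset.sum_congr rfl fun j _ => ?_
        rw [map_smul h]
        rfl
    _ = ∑ k, h (cmat ζ p₁ c₀ t.1 k) (p₀ k) := by
        refine Finset.sum_congr rfl fun k _ => ?_
        rw [cmat, map_sum, LinearMap.sum_apply]

theorem memB_iff_tInj
    (hcog : ∀ (N : Type v) [AddCommGroup N] [Module S N],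
      ∃ (ι : Type v) (f : N →ₗ[S] (ι → E)), Injective f)
    [Module.Injective S E]
    (hdb₁ : ∀ x, ∑ k, c₁ k x • p₁ k = x) (hdb₀ : ∀ x, ∑ k, c₀ k x • p₀ k = x)
    {X : Type v} [AddCommGroup X] [Module S X] [Module Rᵐᵒᵖ X] [IsScalarTower S Rᵐᵒᵖ X] :
    MemB Rᵐᵒᵖ (dualMap S R E ζ) X ↔ tInj ζ p₁ c₁ c₀ X := by
  rw [← tMap_inj_iff S ζ p₁ c₁ p₀ c₀ X hdb₀]
  set T := tMap S ζ p₁ c₁ p₀ c₀ X hdb₀ with hT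
  constructor
  · intro hB
    have hB' : Surjective fun g : X →ₗ[Rᵐᵒᵖ] (P₀ →ₗ[S] E) => dualMap S R E ζ ∘ₗ g := hB
    refine (inj_iff_dual_surj hcog T).mpr ?_
    intro Λ₁
    obtain ⟨h₀, hh⟩ := hB' (gammaDelta' S p₁ c₁ hdb₁ Λ₁)
    have hh' : dualMap S R E ζ ∘ₗ h₀ = gammaDelta' S p₁ c₁ hdb₁ Λ₁ := hh
    refine ⟨deltaFun' S p₀ c₀ h₀, ?_⟩
    show deltaFun' S p₀ c₀ h₀ ∘ₗ T = Λ₁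
    have hsq : deltaFun' S p₀ c₀ h₀ ∘ₗ T = deltaFun' S p₁ c₁ (dualMap S R E ζ ∘ₗ h₀) := by
      ext t
      exact (delta_square ζ p₁ c₁ p₀ c₀ hdb₀ h₀ t).symm
    rw [hsq, hh']
    exact deltaFun'_gammaDelta' S p₁ c₁ hdb₁ Λ₁
  · intro hT'
    have hs := (inj_iff_dual_surj hcog T).mp hT'
    show Surjective fun g : X →ₗ[Rᵐᵒᵖ] (P₀ →ₗ[S] E) => dualMap S R E ζ ∘ₗ g
    intro h₁
    obtain ⟨Λ₀, hΛ⟩ := hs (deltaFun' S p₁ c₁ h₁)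
    refine ⟨gammaDelta' S p₀ c₀ hdb₀ Λ₀, ?_⟩
    have h1 : deltaFun' S p₁ c₁ (dualMap S R E ζ ∘ₗ gammaDelta' S p₀ c₀ hdb₀ Λ₀)
        = deltaFun' S p₁ c₁ h₁ := by
      ext t
      rw [delta_square ζ p₁ c₁ p₀ c₀ hdb₀ (gammaDelta' S p₀ c₀ hdb₀ Λ₀) t,
        deltaFun'_gammaDelta' S p₀ c₀ hdb₀ Λ₀]
      exact LinearMap.congr_fun hΛ t
    have h2 := congrArg (gammaDelta' S p₁ c₁ hdb₁) h1
    rwa [gammaDelta'_deltaFun' S p₁ c₁ hdb₁, gammaDelta'_deltaFun' S p₁ c₁ hdb₁] at h2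

section BetaPrime

variable {Y : Type v} [AddCommGroup Y] [Module S Y] [Module R Y] [IsScalarTower S R Y]

/-- Trace pairing `T_P(Y^d) → Hom_R(P,Y)^d`. -/
def betaFun' {P : Type v} [AddCommGroup P] [Module S P] [Module R P] [IsScalarTower S R P]
    {n : ℕ} (p : Fin n → P) (c : Fin n → (P →ₗ[R] R))
    (t : fixSub S p c (Y →ₗ[S] E)) : (P →ₗ[R] Y) →ₗ[S] E where
  toFun g := ∑ k, t.1 k (g (p k))
  map_add' g g' := by simp [Finset.sum_add_distrib]
  map_smul' s g := by simp [Finset.smul_sum]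

/-- Inverse trace pairing `Hom_R(P,Y)^d → T_P(Y^d)`. -/
def gammaBeta' {P : Type v} [AddCommGroup P] [Module S P] [Module R P] [IsScalarTower S R P]
    {n : ℕ} (p : Fin n → P) (c : Fin n → (P →ₗ[R] R))
    (hdb : ∀ x, ∑ k, c k x • p k = x)
    (Λ : (P →ₗ[R] Y) →ₗ[S] E) : fixSub S p c (Y →ₗ[S] E) :=
  ⟨fun k => gammaBetaInner Λ (c k), by
    intro l
    ext y
    show (∑ j, MulOpposite.op (c l (p j)) • gammaBetaInner Λ (c j)) y
        = Λ (gmap (c l) y)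
    rw [LinearMap.sum_apply]
    have key : ∀ j, (MulOpposite.op (c l (p j)) • gammaBetaInner Λ (c j)) y
        = Λ (gmap (c j) (c l (p j) • y)) := fun j => rfl
    calc ∑ j, (MulOpposite.op (c l (p j)) • gammaBetaInner Λ (c j)) y
        = ∑ j, Λ (gmap (c j) (c l (p j) • y)) := Finset.sum_congr rfl fun j _ => key j
      _ = Λ (∑ j, gmap (c j) (c l (p j) • y)) := (map_sum Λ _ _).symm
      _ = Λ (gmap (c l) y) := by
          congr 1
          ext x
          rw [LinearMap.sum_apply]
          calc ∑ j, gmap (c j) (c l (p j) • y) x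
              = ∑ j, (c j x * c l (p j)) • y := by
                refine Finset.sum_congr rfl fun j _ => ?_
                rw [gmap_apply, mul_smul]
            _ = (∑ j, c j x * c l (p j)) • y := (Finset.sum_smul).symm
            _ = c l x • y := by rw [sum_mul_eq p c hdb (c l) x]
            _ = gmap (c l) y x := rfl⟩

theorem betaFun'_gammaBeta' {P : Type v} [AddCommGroup P] [Module S P] [Module R P]
    [IsScalarTower S R P] {n : ℕ} (p : Fin n → P) (c : Fin n → (P →ₗ[R] R))
    (hdb : ∀ x, ∑ k, c k x • p k = x) (Λ : (P →ₗ[R] Y) →ₗ[S] E) :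
    betaFun' p c (gammaBeta' p c hdb Λ) = Λ := by
  ext g
  show ∑ k, Λ (gmap (c k) (g (p k))) = Λ g
  rw [← map_sum]
  congr 1
  ext x
  rw [LinearMap.sum_apply]
  calc ∑ k, gmap (c k) (g (p k)) x = ∑ k, g (c k x • p k) := by
        refine Finset.sum_congr rfl fun k _ => ?_
        rw [gmap_apply, map_smul]
    _ = g x := by rw [← map_sum, hdb]

theorem gammaBeta'_betaFun' {P : Type v} [AddCommGroup P] [Module S P] [Module R P]
    [IsScalarTower S R P] {n : ℕ} (p : Fin n → P) (c : Fin n → (P →ₗ[R] R))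
    (hdb : ∀ x, ∑ k, c k x • p k = x) (t : fixSub S p c (Y →ₗ[S] E)) :
    gammaBeta' p c hdb (betaFun' p c t) = t := by
  apply Subtype.ext
  funext k
  ext y
  show ∑ j, t.1 j (gmap (c k) y (p j)) = t.1 k y
  calc ∑ j, t.1 j (gmap (c k) y (p j))
      = ∑ j, (MulOpposite.op (c k (p j)) • t.1 j) y := Finset.sum_congr rfl fun j _ => rfl
    _ = (∑ j, MulOpposite.op (c k (p j)) • t.1 j) y := by rw [LinearMap.sum_apply]
    _ = t.1 k y := by rw [t.2 k]

theorem beta_square (hdb₀ : ∀ x, ∑ k, c₀ k x • p₀ k = x)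
    (t : fixSub S p₁ c₁ (Y →ₗ[S] E)) (g : P₀ →ₗ[R] Y) :
    betaFun' p₀ c₀ (tMap S ζ p₁ c₁ p₀ c₀ (Y →ₗ[S] E) hdb₀ t) g = betaFun' p₁ c₁ t (g ∘ₗ ζ) := by
  show ∑ k, cmat ζ p₁ c₀ t.1 k (g (p₀ k)) = ∑ j, t.1 j (g (ζ (p₁ j)))
  calc ∑ k, cmat ζ p₁ c₀ t.1 k (g (p₀ k))
      = ∑ k, ∑ j, t.1 j (c₀ k (ζ (p₁ j)) • g (p₀ k)) := by
        refine Finset.sum_congr rfl fun k _ => ?_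
        rw [cmat, LinearMap.sum_apply]
        exact Finset.sum_congr rfl fun j _ => rfl
    _ = ∑ j, ∑ k, t.1 j (g (c₀ k (ζ (p₁ j)) • p₀ k)) := by
        rw [Finset.sum_comm]
        refine Finset.sum_congr rfl fun j _ => Finset.sum_congr rfl fun k _ => ?_
        exact congrArg _ (map_smul g _ _).symm
    _ = ∑ j, t.1 j (g (ζ (p₁ j))) := by
        refine Finset.sum_congr rfl fun j _ => ?_
        rw [← map_sum, ← map_sum, hdb₀]

theorem memD_iff_memB
    (hcog : ∀ (N : Type v) [AddCommGroup N] [Module S N],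
      ∃ (ι : Type v) (f : N →ₗ[S] (ι → E)), Injective f)
    [Module.Injective S E]
    (hdb₁ : ∀ x, ∑ k, c₁ k x • p₁ k = x) (hdb₀ : ∀ x, ∑ k, c₀ k x • p₀ k = x) :
    MemD R ζ Y ↔ MemB Rᵐᵒᵖ (dualMap S R E ζ) (Y →ₗ[S] E) := by
  rw [memB_iff_tInj ζ p₁ c₁ p₀ c₀ hcog hdb₁ hdb₀,
    ← tMap_inj_iff S ζ p₁ c₁ p₀ c₀ (Y →ₗ[S] E) hdb₀]
  set T := tMap S ζ p₁ c₁ p₀ c₀ (Y →ₗ[S] E) hdb₀ with hTdef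
  let Φ : (P₀ →ₗ[R] Y) →ₗ[S] (P₁ →ₗ[R] Y) :=
    { toFun := fun g => g ∘ₗ ζ
      map_add' := fun _ _ => by ext x; rfl
      map_smul' := fun _ _ => by ext x; rfl }
  have hD : MemD R ζ Y ↔ Surjective ⇑Φ := Iff.rfl
  rw [hD, surj_iff_dual_inj hcog Φ]
  constructor
  · intro hI t t' htt
    have h2 : betaFun' p₁ c₁ t ∘ₗ Φ = betaFun' p₁ c₁ t' ∘ₗ Φ := by
      ext g
      show betaFun' p₁ c₁ t (g ∘ₗ ζ) = betaFun' p₁ c₁ t' (g ∘ₗ ζ)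
      rw [← beta_square ζ p₁ c₁ p₀ c₀ hdb₀ t g, ← beta_square ζ p₁ c₁ p₀ c₀ hdb₀ t' g, htt]
    have h3 := hI h2
    calc t = gammaBeta' p₁ c₁ hdb₁ (betaFun' p₁ c₁ t) := (gammaBeta'_betaFun' p₁ c₁ hdb₁ t).symm
      _ = gammaBeta' p₁ c₁ hdb₁ (betaFun' p₁ c₁ t') := by rw [h3]
      _ = t' := gammaBeta'_betaFun' p₁ c₁ hdb₁ t'
  · intro hT l l' hll
    have h2 : T (gammaBeta' p₁ c₁ hdb₁ l) = T (gammaBeta' p₁ c₁ hdb₁ l') := by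
      have e1 : betaFun' p₀ c₀ (T (gammaBeta' p₁ c₁ hdb₁ l))
          = betaFun' p₀ c₀ (T (gammaBeta' p₁ c₁ hdb₁ l')) := by
        ext g
        rw [beta_square ζ p₁ c₁ p₀ c₀ hdb₀ (gammaBeta' p₁ c₁ hdb₁ l) g,
          beta_square ζ p₁ c₁ p₀ c₀ hdb₀ (gammaBeta' p₁ c₁ hdb₁ l') g,
          betaFun'_gammaBeta' p₁ c₁ hdb₁ l, betaFun'_gammaBeta' p₁ c₁ hdb₁ l']
        exact LinearMap.congr_fun hll g
      calc T (gammaBeta' p₁ c₁ hdb₁ l)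
          = gammaBeta' p₀ c₀ hdb₀ (betaFun' p₀ c₀ (T (gammaBeta' p₁ c₁ hdb₁ l))) :=
            (gammaBeta'_betaFun' p₀ c₀ hdb₀ _).symm
        _ = gammaBeta' p₀ c₀ hdb₀ (betaFun' p₀ c₀ (T (gammaBeta' p₁ c₁ hdb₁ l'))) := by rw [e1]
        _ = T (gammaBeta' p₁ c₁ hdb₁ l') := gammaBeta'_betaFun' p₀ c₀ hdb₀ _
    have h3 := hT h2
    calc l = betaFun' p₁ c₁ (gammaBeta' p₁ c₁ hdb₁ l) := (betaFun'_gammaBeta' p₁ c₁ hdb₁ l).symm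
      _ = betaFun' p₁ c₁ (gammaBeta' p₁ c₁ hdb₁ l') := by rw [h3]
      _ = l' := betaFun'_gammaBeta' p₁ c₁ hdb₁ l'

end BetaPrime

theorem memB_pi
    (hcog : ∀ (N : Type v) [AddCommGroup N] [Module S N],
      ∃ (ι : Type v) (f : N →ₗ[S] (ι → E)), Injective f)
    [Module.Injective S E]
    (hdb₁ : ∀ x, ∑ k, c₁ k x • p₁ k = x) (hdb₀ : ∀ x, ∑ k, c₀ k x • p₀ k = x)
    {ι : Type v} (X : ι → Type v) [∀ i, AddCommGroup (X i)] [∀ i, Module Rᵐᵒᵖ (X i)]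
    (hX : ∀ i, MemB Rᵐᵒᵖ (dualMap S R E ζ) (X i)) :
    MemB Rᵐᵒᵖ (dualMap S R E ζ) (∀ i, X i) := by
  letI instSX : ∀ i, Module S (X i) := fun i => Module.compHom (X i) (algebraMap S Rᵐᵒᵖ)
  haveI instTX : ∀ i, IsScalarTower S Rᵐᵒᵖ (X i) := fun i =>
    ⟨fun s r x => by
      show (s • r) • x = algebraMap S Rᵐᵒᵖ s • (r • x)
      rw [Algebra.smul_def, mul_smul]⟩
  letI : Module S (∀ i, X i) := Module.compHom (∀ i, X i) (algebraMap S Rᵐᵒᵖ)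
  haveI : IsScalarTower S Rᵐᵒᵖ (∀ i, X i) :=
    ⟨fun s r x => by
      show (s • r) • x = algebraMap S Rᵐᵒᵖ s • (r • x)
      rw [Algebra.smul_def, mul_smul]⟩
  rw [memB_iff_tInj ζ p₁ c₁ p₀ c₀ hcog hdb₁ hdb₀]
  exact tInj_pi ζ p₁ c₁ c₀ X fun i =>
    (memB_iff_tInj ζ p₁ c₁ p₀ c₀ hcog hdb₁ hdb₀ (X := X i)).mp (hX i)

end CharKey

section DSum

variable {R : Type u'} [Ring R]

theorem memD_directSum {P₁ P₀ : Type v} [AddCommGroup P₁] [Module R P₁] [Module.Finite R P₁]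
    [AddCommGroup P₀] [Module R P₀] (ζ : P₁ →ₗ[R] P₀)
    {ι : Type v} (N : ι → Type v) [∀ i, AddCommGroup (N i)] [∀ i, Module R (N i)]
    (hN : ∀ i, MemD R ζ (N i)) : MemD R ζ (DirectSum ι N) := by
  classical
  show Surjective fun g₀ : P₀ →ₗ[R] DirectSum ι N => g₀ ∘ₗ ζ
  intro g
  obtain ⟨n, b, hb⟩ := Module.Finite.exists_fin (R := R) (M := P₁)
  choose h hh using fun i => hN i (DirectSum.component R ι N i ∘ₗ g)
  set F : Finset ι := Finset.univ.biUnion (fun k => (g (b k)).support) with hF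
  have hzero : ∀ j, j ∉ F → DirectSum.component R ι N j ∘ₗ g = 0 := by
    intro j hj
    apply LinearMap.ext_on hb
    rintro x ⟨k, rfl⟩
    show DirectSum.component R ι N j (g (b k)) = 0
    by_contra hne
    exact hj (Finset.mem_biUnion.mpr ⟨k, Finset.mem_univ k, DFinsupp.mem_support_iff.mpr hne⟩)
  refine ⟨∑ i ∈ F, DirectSum.lof R ι N i ∘ₗ h i, ?_⟩
  show (∑ i ∈ F, DirectSum.lof R ι N i ∘ₗ h i) ∘ₗ ζ = g
  ext x : 1
  rw [LinearMap.comp_apply, LinearMap.sum_apply]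
  have hterm : ∀ i, (DirectSum.lof R ι N i ∘ₗ h i) (ζ x)
      = DirectSum.lof R ι N i (DirectSum.component R ι N i (g x)) := by
    intro i
    rw [LinearMap.comp_apply]
    congr 1
    exact LinearMap.congr_fun (hh i) x
  rw [Finset.sum_congr rfl fun i _ => hterm i]
  have hsupp : (g x).support ⊆ F := by
    intro j hjs
    by_contra hj
    exact DFinsupp.mem_support_iff.mp hjs (LinearMap.congr_fun (hzero j hj) x)
  rw [← Finset.sum_subset hsupp (fun i _ his => by
    rw [show DirectSum.component R ι N i (g x) = 0 from DFinsupp.notMem_support_iff.mp his,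
      map_zero])]
  simpa [DirectSum.lof_eq_of, ← DirectSum.apply_eq_component] using DirectSum.sum_support_of (g x)

end DSum


/-- For a projective presentation `P₂ → P₁ →ζ→ P₀ → M → 0` of a left `R`-module `M` by finitely
presented projectives: `M` is partial silting with respect to `ζ` (i.e. `M ∈ 𝒟_ζ` and `𝒟_ζ` is
closed under direct sums) iff `M^d` is partial cosilting with respect to `ζ^d` (i.e.
`M^d ∈ 𝓑_{ζ^d}` and `𝓑_{ζ^d}` is closed under arbitrary direct products). -/
theorem stmt_11 {S : Type u} [CommRing S] {R : Type u'} [Ring R] [Algebra S R]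
    (E : Type v) [AddCommGroup E] [Module S E] [Module.Injective S E]
    (hcog : ∀ (N : Type v) [AddCommGroup N] [Module S N],
      ∃ (ι : Type v) (f : N →ₗ[S] (ι → E)), Injective f)
    (P₂ P₁ P₀ M : Type v)
    [AddCommGroup P₂] [Module R P₂] [Module.Projective R P₂] [Module.FinitePresentation R P₂]
    [AddCommGroup P₁] [Module S P₁] [Module R P₁] [IsScalarTower S R P₁]
    [Module.Projective R P₁] [Module.FinitePresentation R P₁]
    [AddCommGroup P₀] [Module S P₀] [Module R P₀] [IsScalarTower S R P₀]
    [Module.Projective R P₀] [Module.FinitePresentation R P₀]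
    [AddCommGroup M] [Module S M] [Module R M] [IsScalarTower S R M]
    (d : P₂ →ₗ[R] P₁) (ζ : P₁ →ₗ[R] P₀) (π : P₀ →ₗ[R] M)
    (hπ : Surjective π) (hexζ : LinearMap.range ζ = LinearMap.ker π)
    (hexd : LinearMap.range d = LinearMap.ker ζ) :
    (MemD R ζ M ∧
      ∀ (ι : Type v) (N : ι → Type v) [∀ i, AddCommGroup (N i)] [∀ i, Module R (N i)],
        (∀ i, MemD R ζ (N i)) → MemD R ζ (DirectSum ι N)) ↔
    (MemB Rᵐᵒᵖ (dualMap S R E ζ) (M →ₗ[S] E) ∧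
      ∀ (ι : Type v) (X : ι → Type v) [∀ i, AddCommGroup (X i)] [∀ i, Module Rᵐᵒᵖ (X i)],
        (∀ i, MemB Rᵐᵒᵖ (dualMap S R E ζ) (X i)) → MemB Rᵐᵒᵖ (dualMap S R E ζ) (∀ i, X i)) := by
  obtain ⟨n₁, p₁v, c₁v, hdb₁⟩ := exists_dual_basis (R := R) P₁
  obtain ⟨n₀, p₀v, c₀v, hdb₀⟩ := exists_dual_basis (R := R) P₀
  constructor
  · rintro ⟨hM, -⟩
    refine ⟨(memD_iff_memB ζ p₁v c₁v p₀v c₀v hcog hdb₁ hdb₀).mp hM, ?_⟩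
    intro ι X _ _ hX
    exact memB_pi ζ p₁v c₁v p₀v c₀v hcog hdb₁ hdb₀ X hX
  · rintro ⟨hM, -⟩
    refine ⟨(memD_iff_memB ζ p₁v c₁v p₀v c₀v hcog hdb₁ hdb₀).mpr hM, ?_⟩
    intro ι N _ _ hN
    exact memD_directSum ζ N hN
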